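/- Let $\bar{\mu}$ be nonincreasing and finite on $(0,\infty)$, $b\in\mathbb{R}$, and $u>0$. Then $\frac{1}{t}\left(1-\exp\left(-\int_0^t\bar{\mu}(u+b(t-v))\,dv\right)\right)\to \bar{\mu}(u)$ as $t\to 0^+$, at every continuity point $u$ of $\bar{\mu}$. -/

import Mathlib

open MeasureTheory Filter

/-- Small-time asymptotics of the one-dimensional law of the ESN:
`(1/t)(1 - exp(-∫_0^t μ̄(u + b(t-v)) dv)) → μ̄(u)` as `t → 0⁺`,
at every continuity point `u > 0` of `μ̄`. -/
theorem esn_small_time_asymptotics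
    (b : ℝ) (μbar : ℝ → ℝ) (hmono : AntitoneOn μbar (Set.Ioi 0))
    (hnonneg : ∀ x, 0 < x → 0 ≤ μbar x)
    (u : ℝ) (hu : 0 < u) (hcont : ContinuousAt μbar u) :
    Tendsto
      (fun t => (1 / t) * (1 - Real.exp (-(∫ v in (0:ℝ)..t, μbar (u + b * (t - v))))))
      (nhdsWithin 0 (Set.Ioi 0)) (nhds (μbar u)) := by
  set c : ℝ := |b| + 1 with hc_def
  have hc : 0 < c := by positivity
  set ε : ℝ := u / (2 * c) with hε_def
  have hε : 0 < ε := by positivity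
  set I : ℝ → ℝ := fun t => ∫ v in (0:ℝ)..t, μbar (u + b * (t - v)) with hI_def
  have hmem : Set.Ioo (0:ℝ) ε ∈ nhdsWithin 0 (Set.Ioi 0) :=
    Ioo_mem_nhdsGT_of_mem ⟨le_refl 0, hε⟩
  -- basic bounds for small t
  have hbt : ∀ t ∈ Set.Ioo (0:ℝ) ε, |b| * t < u / 2 := by
    intro t ht
    have h1 : t * (2 * c) < u := (lt_div_iff₀ (by positivity)).mp ht.2
    nlinarith [abs_nonneg b, ht.1]
  have hφpos : ∀ t ∈ Set.Ioo (0:ℝ) ε, ∀ v ∈ Set.Icc (0:ℝ) t,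
      u - |b| * t ≤ u + b * (t - v) ∧ u + b * (t - v) ≤ u + |b| * t := by
    intro t ht v hv
    have habs : |b * (t - v)| ≤ |b| * t := by
      rw [abs_mul]
      have : |t - v| ≤ t := by
        rw [abs_of_nonneg (by linarith [hv.2])]
        linarith [hv.1]
      exact mul_le_mul_of_nonneg_left this (abs_nonneg b)
    obtain ⟨h1, h2⟩ := abs_le.mp habs
    constructor <;> linarith
  have hlowpos : ∀ t ∈ Set.Ioo (0:ℝ) ε, 0 < u - |b| * t := by
    intro t ht; have := hbt t ht; linarith
  -- integrability
  have hint : ∀ t ∈ Set.Ioo (0:ℝ) ε,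
      IntervalIntegrable (fun v => μbar (u + b * (t - v))) volume 0 t := by
    intro t ht
    have huicc : Set.uIcc (0:ℝ) t = Set.Icc 0 t := Set.uIcc_of_le ht.1.le
    have hmemIoi : ∀ v ∈ Set.Icc (0:ℝ) t, u + b * (t - v) ∈ Set.Ioi (0:ℝ) := by
      intro v hv
      have := (hφpos t ht v hv).1
      have := hlowpos t ht
      exact Set.mem_Ioi.mpr (by linarith)
    rcases le_or_gt 0 b with hb | hb
    · apply MonotoneOn.intervalIntegrable
      rw [huicc]
      intro v₁ h₁ v₂ h₂ h12
      exact hmono (hmemIoi v₂ h₂) (hmemIoi v₁ h₁) (by nlinarith)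
    · apply AntitoneOn.intervalIntegrable
      rw [huicc]
      intro v₁ h₁ v₂ h₂ h12
      exact hmono (hmemIoi v₁ h₁) (hmemIoi v₂ h₂) (by nlinarith)
  -- integral bounds
  have hIbound : ∀ t ∈ Set.Ioo (0:ℝ) ε,
      t * μbar (u + |b| * t) ≤ I t ∧ I t ≤ t * μbar (u - |b| * t) := by
    intro t ht
    have hmemIoi : ∀ v ∈ Set.Icc (0:ℝ) t, u + b * (t - v) ∈ Set.Ioi (0:ℝ) := by
      intro v hv
      have := (hφpos t ht v hv).1
      have := hlowpos t ht
      exact Set.mem_Ioi.mpr (by linarith)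
    have hup : u + |b| * t ∈ Set.Ioi (0:ℝ) := by
      have := abs_nonneg b; have := ht.1; exact Set.mem_Ioi.mpr (by nlinarith)
    have hlo : u - |b| * t ∈ Set.Ioi (0:ℝ) := Set.mem_Ioi.mpr (hlowpos t ht)
    constructor
    · have := intervalIntegral.integral_mono_on ht.1.le
        (intervalIntegrable_const (c := μbar (u + |b| * t))) (hint t ht)
        (fun v hv => hmono (hmemIoi v hv) hup (hφpos t ht v hv).2)
      simpa [smul_eq_mul, mul_comm] using this
    · have := intervalIntegral.integral_mono_on ht.1.le (hint t ht)
        (intervalIntegrable_const (c := μbar (u - |b| * t)))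
        (fun v hv => hmono hlo (hmemIoi v hv) (hφpos t ht v hv).1)
      simpa [smul_eq_mul, mul_comm] using this
  -- limits of the bounding functions
  have htend_aux : ∀ s : ℝ, Tendsto (fun t : ℝ => μbar (u + s * t))
      (nhdsWithin 0 (Set.Ioi 0)) (nhds (μbar u)) := by
    intro s
    have h1 : Tendsto (fun t : ℝ => u + s * t) (nhdsWithin 0 (Set.Ioi 0)) (nhds u) := by
      have : Tendsto (fun t : ℝ => u + s * t) (nhds 0) (nhds (u + s * 0)) :=
        (continuous_const.add (continuous_const.mul continuous_id)).tendsto 0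
      simpa using this.mono_left nhdsWithin_le_nhds
    exact hcont.tendsto.comp h1
  have hU : Tendsto (fun t : ℝ => μbar (u - |b| * t))
      (nhdsWithin 0 (Set.Ioi 0)) (nhds (μbar u)) := by
    have := htend_aux (-|b|)
    simpa [sub_eq_add_neg, neg_mul] using this
  have hL : Tendsto (fun t : ℝ => μbar (u + |b| * t))
      (nhdsWithin 0 (Set.Ioi 0)) (nhds (μbar u)) := htend_aux |b|
  -- J t := I t / t tends to μbar u
  have hJ : Tendsto (fun t => I t / t) (nhdsWithin 0 (Set.Ioi 0)) (nhds (μbar u)) := by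
    apply tendsto_of_tendsto_of_tendsto_of_le_of_le' hL hU
    · filter_upwards [hmem] with t ht
      exact (le_div_iff₀ ht.1).mpr (by linarith [(hIbound t ht).1])
    · filter_upwards [hmem] with t ht
      exact (div_le_iff₀ ht.1).mpr (by linarith [(hIbound t ht).2])
  -- I tends to 0
  have hI0 : Tendsto I (nhdsWithin 0 (Set.Ioi 0)) (nhds 0) := by
    have h1 : Tendsto (fun t => (I t / t) * t) (nhdsWithin 0 (Set.Ioi 0))
        (nhds (μbar u * 0)) :=
      hJ.mul (tendsto_id.mono_left nhdsWithin_le_nhds)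
    rw [mul_zero] at h1
    apply h1.congr'
    filter_upwards [hmem] with t ht
    exact div_mul_cancel₀ _ (ne_of_gt ht.1)
  -- I nonneg
  have hInn : ∀ t ∈ Set.Ioo (0:ℝ) ε, 0 ≤ I t := by
    intro t ht
    have hup : 0 < u + |b| * t := by
      have := abs_nonneg b; have := ht.1; nlinarith
    have := (hIbound t ht).1
    nlinarith [hnonneg _ hup, ht.1]
  -- lower bound function tends to μbar u
  have hLB : Tendsto (fun t => (I t / t) / (1 + I t)) (nhdsWithin 0 (Set.Ioi 0))
      (nhds (μbar u)) := by
    have h1 : Tendsto (fun t => 1 + I t) (nhdsWithin 0 (Set.Ioi 0)) (nhds 1) := by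
      simpa using (tendsto_const_nhds (x := (1:ℝ))).add hI0
    have := hJ.div h1 one_ne_zero
    rw [div_one] at this
    exact this
  -- final squeeze
  apply tendsto_of_tendsto_of_tendsto_of_le_of_le' hLB hJ
  · filter_upwards [hmem] with t ht
    have hIn := hInn t ht
    have h1I : (0:ℝ) < 1 + I t := by linarith
    have hIt : (∫ v in (0:ℝ)..t, μbar (u + b * (t - v))) = I t := rfl
    rw [hIt]
    have hexp : Real.exp (-(I t)) ≤ 1 / (1 + I t) := by
      have h := one_div_le_one_div_of_le h1I (show (1:ℝ) + I t ≤ Real.exp (I t) by linarith [Real.add_one_le_exp (I t)])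
      rw [Real.exp_neg]
      simpa [one_div] using h
    have h2 : I t / (1 + I t) ≤ 1 - Real.exp (-(I t)) := by
      have he : 1 - 1 / (1 + I t) = I t / (1 + I t) := by field_simp; ring
      linarith
    calc I t / t / (1 + I t) = (I t / (1 + I t)) / t := by ring
      _ ≤ (1 - Real.exp (-(I t))) / t := div_le_div_of_nonneg_right h2 ht.1.le
      _ = 1 / t * (1 - Real.exp (-(I t))) := by rw [one_div, inv_mul_eq_div]
  · filter_upwards [hmem] with t ht
    have hIt : (∫ v in (0:ℝ)..t, μbar (u + b * (t - v))) = I t := rfl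
    rw [hIt]
    have hexp : 1 - I t ≤ Real.exp (-(I t)) := by
      linarith [Real.add_one_le_exp (-(I t))]
    have h2 : 1 - Real.exp (-(I t)) ≤ I t := by linarith
    calc (1 / t) * (1 - Real.exp (-(I t))) = (1 - Real.exp (-(I t))) / t := by
          rw [one_div, inv_mul_eq_div]
      _ ≤ I t / t := div_le_div_of_nonneg_right h2 ht.1.le
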